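/- The only irregular chain of maximal length: among all chains (A_1, …, A_{r−1}) with ∅ ⊊ A_1 ⊊ ⋯ ⊊ A_{r−1} ⊊ J (where r = |J|, so |A_k| = k for all k), the unique nowhere-regular chain is π^{1̂} = ({j_{r'+1}}, {j_{r'+1}, j_{r'+2}}, …, J'', J'' ∪ {j_{r'}}, …, J\{j_1}), i.e., the chain that adds the elements of J'' in increasing order and then the elements of J' in decreasing order, stopping before J. -/

import Mathlib

/-- `mM K` is `min (K ∩ J')` if `K ∩ J'` is nonempty, and `max (K ∩ J'')` otherwise
(with junk value `0` when both are empty). -/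
def mM (J' J'' K : Finset ℕ) : ℕ :=
  (K ∩ J').min.untopD ((K ∩ J'').max.unbotD 0)

/-- The augmented entry `A_k` of the chain `L = (A_1, …, A_p)`: `A_0 = ∅`,
`A_k = L[k-1]` for `1 ≤ k ≤ p`, and `A_k = J` for `k > p`. -/
def elt (J : Finset ℕ) (L : List (Finset ℕ)) (k : ℕ) : Finset ℕ :=
  if k = 0 then ∅ else L.getD (k - 1) J

/-- `L` is regular at position `i₀` (`1 ≤ i₀ ≤ p`, with `A_0 = ∅`, `A_{p+1} = J`):
`|A_i| = i` for all `i ≤ i₀` and `A_{i₀} \ A_{i₀−1} = {mM(A_{i₀+1} \ A_{i₀−1})}`. -/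
def RegularAt (J' J'' : Finset ℕ) (L : List (Finset ℕ)) (i₀ : ℕ) : Prop :=
  1 ≤ i₀ ∧ i₀ ≤ L.length ∧
  (∀ i, 1 ≤ i → i ≤ i₀ → (elt (J' ∪ J'') L i).card = i) ∧
  elt (J' ∪ J'') L i₀ \ elt (J' ∪ J'') L (i₀ - 1)
    = {mM J' J'' (elt (J' ∪ J'') L (i₀ + 1) \ elt (J' ∪ J'') L (i₀ - 1))}

/-- A chain is irregular if it is regular at no position. -/
def Irregular (J' J'' : Finset ℕ) (L : List (Finset ℕ)) : Prop :=
  ∀ i₀, ¬ RegularAt J' J'' L i₀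

/-- `𝔓₀`: nonempty strict chains `∅ ⊊ A_1 ⊊ ⋯ ⊊ A_p ⊊ J`. -/
def P0 (J : Finset ℕ) : Set (List (Finset ℕ)) :=
  {L | L ≠ [] ∧ L.Chain' (· ⊂ ·) ∧ ∀ A ∈ L, ∅ ⊂ A ∧ A ⊂ J}

/-- The elements of `J''` in increasing order followed by those of `J'` in
decreasing order. -/
def sortedJ (J' J'' : Finset ℕ) : List ℕ :=
  J''.sort (· ≤ ·) ++ (J'.sort (· ≤ ·)).reverse

/-- The chain of initial segments `(A_1, …, A_m)` of a list `s`,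
`A_k = {s_1, …, s_k}`. -/
def chainOf (s : List ℕ) (m : ℕ) : List (Finset ℕ) :=
  (List.range m).map (fun k => (s.take (k + 1)).toFinset)

/-- The maximal chain `1̂`, adding the elements of `J''` in increasing order and
then those of `J'` in decreasing order, ending at `J`. -/
def oneHat (J' J'' : Finset ℕ) : List (Finset ℕ) :=
  chainOf (sortedJ J' J'') (sortedJ J' J'').length

/-- The chain `π^{1̂}`: same as `1̂` but stopping just before `J`. -/
def piOneHat (J' J'' : Finset ℕ) : List (Finset ℕ) :=
  chainOf (sortedJ J' J'') ((sortedJ J' J'').length - 1)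

/-- The path `0̂ = (∅)`. -/
def zeroHat : List (Finset ℕ) := [∅]

/-- `𝔓 = 𝔓₀ ∪ {0̂, 1̂}`. -/
def PP (J' J'' : Finset ℕ) : Set (List (Finset ℕ)) :=
  P0 (J' ∪ J'') ∪ {zeroHat, oneHat J' J''}

/-- The first gap position `i₀`: the length of the maximal initial segment of the
chain along which the set sizes increase by exactly one. -/
def gapIdx (L : List (Finset ℕ)) : ℕ :=
  ((L.zip (List.range L.length)).takeWhile
    (fun p => decide (p.1.card = p.2 + 1))).length

/-- The insertion map `℘`: inserts `B = A_{i₀} ∪ {mM(A_{i₀+1} \ A_{i₀})}` at the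
first gap position; `℘(0̂) = ({min J'})` if `J' ≠ ∅`, else `({max J''})`. -/
def insMap (J' J'' : Finset ℕ) (L : List (Finset ℕ)) : List (Finset ℕ) :=
  if L = zeroHat then [{mM J' J'' (J' ∪ J'')}]
  else
    L.take (gapIdx L) ++
      (elt (J' ∪ J'') L (gapIdx L) ∪
        {mM J' J'' (elt (J' ∪ J'') L (gapIdx L + 1) \ elt (J' ∪ J'') L (gapIdx L))})
      :: L.drop (gapIdx L)



def allowedRel (J' J'' : Finset ℕ) (x y : ℕ) : Prop :=
  (x ∈ J'' ∧ y ∈ J'' ∧ x < y) ∨ (x ∈ J'' ∧ y ∈ J') ∨ (x ∈ J' ∧ y ∈ J' ∧ y < x)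

lemma pair_min (x y : ℕ) : ({x, y} : Finset ℕ).min = ((min x y : ℕ) : WithTop ℕ) := by
  simp [Finset.min_insert]; rfl

lemma pair_max (x y : ℕ) : ({x, y} : Finset ℕ).max = ((max x y : ℕ) : WithBot ℕ) := by
  simp [Finset.max_insert]; rfl

lemma mM_pair {J' J'' : Finset ℕ} (hdisj : Disjoint J' J'')
    {x y : ℕ} (hx : x ∈ J' ∪ J'') (hy : y ∈ J' ∪ J'') (hxy : x ≠ y) :
    x ≠ mM J' J'' {x, y} ↔ allowedRel J' J'' x y := by
  have hd := Finset.disjoint_left.mp hdisj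
  rcases Finset.mem_union.mp hx with hx1 | hx2 <;> rcases Finset.mem_union.mp hy with hy1 | hy2
  · -- both in J'
    have h1 : ({x, y} : Finset ℕ) ∩ J' = {x, y} := by
      rw [Finset.insert_inter_of_mem hx1, Finset.singleton_inter_of_mem hy1]
    have hm : mM J' J'' {x, y} = min x y := by
      rw [mM, h1, pair_min]; exact WithTop.untopD_coe _ _
    rw [hm, allowedRel]
    constructor
    · intro h
      refine Or.inr (Or.inr ⟨hx1, hy1, ?_⟩)
      rcases lt_or_gt_of_ne hxy with h' | h'
      · exact absurd (min_eq_left h'.le).symm h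
      · exact h'
    · rintro (⟨h, _⟩ | ⟨h, _⟩ | ⟨_, _, h⟩)
      · exact absurd h (hd hx1)
      · exact absurd h (hd hx1)
      · rw [min_eq_right h.le]; exact hxy
  · -- x ∈ J', y ∈ J''
    have h1 : ({x, y} : Finset ℕ) ∩ J' = {x} := by
      rw [Finset.insert_inter_of_mem hx1, Finset.singleton_inter_of_notMem (fun h => hd h hy2)]
      rfl
    have hm : mM J' J'' {x, y} = x := by
      rw [mM, h1, Finset.min_singleton]; exact WithTop.untopD_coe _ _
    rw [hm, allowedRel]
    simp only [ne_eq, not_true_eq_false, false_iff]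
    rintro (⟨h, _⟩ | ⟨h, _⟩ | ⟨_, h, _⟩)
    · exact hd hx1 h
    · exact hd hx1 h
    · exact hd h hy2
  · -- x ∈ J'', y ∈ J'
    have h1 : ({x, y} : Finset ℕ) ∩ J' = {y} := by
      rw [Finset.insert_inter_of_notMem (fun h => hd h hx2), Finset.singleton_inter_of_mem hy1]
    have hm : mM J' J'' {x, y} = y := by
      rw [mM, h1, Finset.min_singleton]; exact WithTop.untopD_coe _ _
    rw [hm]
    constructor
    · intro _; exact Or.inr (Or.inl ⟨hx2, hy1⟩)
    · intro _; exact hxy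
  · -- both in J''
    have h1 : ({x, y} : Finset ℕ) ∩ J' = ∅ := by
      rw [Finset.insert_inter_of_notMem (fun h => hd h hx2),
        Finset.singleton_inter_of_notMem (fun h => hd h hy2)]
    have h2 : ({x, y} : Finset ℕ) ∩ J'' = {x, y} := by
      rw [Finset.insert_inter_of_mem hx2, Finset.singleton_inter_of_mem hy2]
    have hm : mM J' J'' {x, y} = max x y := by
      rw [mM, h1, h2, Finset.min_empty, pair_max]
      rfl
    rw [hm, allowedRel]
    constructor
    · intro h
      refine Or.inl ⟨hx2, hy2, ?_⟩
      rcases lt_or_gt_of_ne hxy with h' | h'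
      · exact h'
      · exact absurd (max_eq_left h'.le).symm h
    · rintro (⟨_, _, h⟩ | ⟨_, h⟩ | ⟨h, _⟩)
      · rw [max_eq_right h.le]; exact hxy
      · exact absurd h (fun h' => hd h' hy2)
      · exact absurd h (fun h' => hd h' hx2)

lemma sortedJ_nodup {J' J'' : Finset ℕ} (hdisj : Disjoint J' J'') :
    (sortedJ J' J'').Nodup := by
  rw [sortedJ, List.nodup_append]
  refine ⟨Finset.sort_nodup _ _, List.nodup_reverse.mpr (Finset.sort_nodup _ _), ?_⟩
  intro x hx y hx' rfl
  exact Finset.disjoint_right.mp hdisj ((Finset.mem_sort _).mp hx)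
    ((Finset.mem_sort _).mp (List.mem_reverse.mp hx'))

lemma sortedJ_toFinset (J' J'' : Finset ℕ) : (sortedJ J' J'').toFinset = J' ∪ J'' := by
  simp [sortedJ, Finset.union_comm]

lemma sortedJ_length {J' J'' : Finset ℕ} (hdisj : Disjoint J' J'') :
    (sortedJ J' J'').length = (J' ∪ J'').card := by
  simp [sortedJ, Finset.card_union_of_disjoint hdisj, Nat.add_comm]

lemma chain'_sortedJ {J' J'' : Finset ℕ} :
    List.Chain' (allowedRel J' J'') (sortedJ J' J'') := by
  rw [sortedJ, List.Chain', List.isChain_append]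
  refine ⟨?_, ?_, ?_⟩
  · refine List.Pairwise.isChain ?_
    exact (Finset.sortedLT_sort J'').pairwise.imp_of_mem (fun ha hb h =>
      Or.inl ⟨(Finset.mem_sort _).mp ha, (Finset.mem_sort _).mp hb, h⟩)
  · refine List.Pairwise.isChain (List.pairwise_reverse.mpr ?_)
    exact (Finset.sortedLT_sort J').pairwise.imp_of_mem (fun ha hb h =>
      Or.inr (Or.inr ⟨(Finset.mem_sort _).mp hb, (Finset.mem_sort _).mp ha, h⟩))
  · intro x hx y hy
    refine Or.inr (Or.inl ⟨?_, ?_⟩)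
    · exact (Finset.mem_sort _).mp (List.mem_of_mem_getLast? hx)
    · exact (Finset.mem_sort _).mp (List.mem_reverse.mp (List.mem_of_mem_head? hy))

lemma all_in_J' {J' J'' : Finset ℕ} (hdisj : Disjoint J' J'') :
    ∀ (l : List ℕ), List.Chain' (allowedRel J' J'') l → (∀ x ∈ l.head?, x ∈ J') →
      ∀ x ∈ l, x ∈ J'
  | [] => by simp
  | a :: t => by
    intro hch hhd x hx
    have ha : a ∈ J' := hhd a rfl
    rw [List.Chain', List.isChain_cons] at hch
    rcases List.mem_cons.mp hx with rfl | hxt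
    · exact ha
    · refine all_in_J' hdisj t hch.2 ?_ x hxt
      intro y hy
      rcases hch.1 y hy with ⟨h, _⟩ | ⟨h, _⟩ | ⟨_, h, _⟩
      · exact absurd ha (Finset.disjoint_right.mp hdisj h)
      · exact absurd ha (Finset.disjoint_right.mp hdisj h)
      · exact h

lemma chain'_imp_mem {α : Type*} {R S : α → α → Prop} :
    ∀ (l : List α), (∀ a ∈ l, ∀ b ∈ l, R a b → S a b) → List.Chain' R l → List.Chain' S l
  | [] => fun _ _ => List.IsChain.nil
  | a :: t => by
    intro h hch
    rw [List.Chain', List.isChain_cons] at hch ⊢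
    refine ⟨fun y hy => h a List.mem_cons_self y
      (List.mem_cons_of_mem _ (List.mem_of_mem_head? hy)) (hch.1 y hy), ?_⟩
    exact chain'_imp_mem t (fun x hx y hy => h x (List.mem_cons_of_mem _ hx) y
      (List.mem_cons_of_mem _ hy)) hch.2

lemma eq_sortedJ {J' J'' : Finset ℕ} (hdisj : Disjoint J' J'')
    {m : List ℕ} (hnd : m.Nodup) (hfin : m.toFinset = J' ∪ J'')
    (hch : List.Chain' (allowedRel J' J'') m) : m = sortedJ J' J'' := by
  classical
  set p : ℕ → Bool := fun x => decide (x ∈ J'') with hp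
  set m₂ := m.takeWhile p with hm2
  set m₁ := m.dropWhile p with hm1
  have hsplit : m₂ ++ m₁ = m := List.takeWhile_append_dropWhile
  have hm2mem : ∀ x ∈ m₂, x ∈ J'' := fun x hx => of_decide_eq_true (List.mem_takeWhile_imp (p := p) hx)
  have hmem : ∀ x ∈ m, x ∈ J' ∪ J'' := fun x hx => hfin ▸ List.mem_toFinset.mpr hx
  have hm1mem : ∀ x ∈ m₁, x ∈ J' := by
    refine all_in_J' hdisj m₁ (hch.suffix (List.dropWhile_suffix p)) ?_
    intro x hx
    have hpx : p x = false := by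
      have := List.head?_dropWhile_not p m
      rw [← hm1] at this
      rw [show m₁.head? = some x from hx] at this
      exact this
    have hxm : x ∈ m := (List.dropWhile_suffix p).mem (List.mem_of_mem_head? hx)
    rcases Finset.mem_union.mp (hmem x hxm) with h | h
    · exact h
    · rw [hp] at hpx; simp at hpx; exact absurd h hpx
  have hfin2 : m₂.toFinset = J'' := by
    apply Finset.Subset.antisymm
    · intro x hx; exact hm2mem x (List.mem_toFinset.mp hx)
    · intro x hx
      have hxm : x ∈ m := by rw [← List.mem_toFinset, hfin]; exact Finset.mem_union_right _ hx
      rw [← hsplit] at hxm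
      rcases List.mem_append.mp hxm with h | h
      · exact List.mem_toFinset.mpr h
      · exact absurd hx (Finset.disjoint_left.mp hdisj (hm1mem x h))
  have hfin1 : m₁.toFinset = J' := by
    apply Finset.Subset.antisymm
    · intro x hx; exact hm1mem x (List.mem_toFinset.mp hx)
    · intro x hx
      have hxm : x ∈ m := by rw [← List.mem_toFinset, hfin]; exact Finset.mem_union_left _ hx
      rw [← hsplit] at hxm
      rcases List.mem_append.mp hxm with h | h
      · exact absurd hx (Finset.disjoint_right.mp hdisj (hm2mem x h))
      · exact List.mem_toFinset.mpr h
  have hnd2 : m₂.Nodup := ((List.takeWhile_prefix p).sublist).nodup hnd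
  have hnd1 : m₁.Nodup := ((List.dropWhile_suffix p).sublist).nodup hnd
  have hch2 : List.Chain' (· < ·) m₂ := by
    refine chain'_imp_mem m₂ ?_ (hch.prefix (List.takeWhile_prefix p))
    intro a ha b hb h
    rcases h with ⟨_, _, h⟩ | ⟨_, h⟩ | ⟨h, _⟩
    · exact h
    · exact absurd (hm2mem b hb) (Finset.disjoint_left.mp hdisj h)
    · exact absurd (hm2mem a ha) (Finset.disjoint_left.mp hdisj h)
  have hch1 : List.Chain' (fun a b => b < a) m₁ := by
    refine chain'_imp_mem m₁ ?_ (hch.suffix (List.dropWhile_suffix p))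
    intro a ha b hb h
    rcases h with ⟨h, _, _⟩ | ⟨h, _⟩ | ⟨_, _, h⟩
    · exact absurd (hm1mem a ha) (Finset.disjoint_right.mp hdisj h)
    · exact absurd (hm1mem a ha) (Finset.disjoint_right.mp hdisj h)
    · exact h
  have h2eq : m₂ = J''.sort (· ≤ ·) := by
    refine List.Perm.eq_of_pairwise' (r := (· ≤ ·)) ?_ (Finset.pairwise_sort _ _)
      (List.perm_of_nodup_nodup_toFinset_eq hnd2 (Finset.sort_nodup _ _)
        (by rw [hfin2, Finset.sort_toFinset]))
    exact (List.isChain_iff_pairwise.mp hch2).imp le_of_lt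
  have h1eq : m₁ = (J'.sort (· ≤ ·)).reverse := by
    have hrev : m₁.reverse = J'.sort (· ≤ ·) := by
      refine List.Perm.eq_of_pairwise' (r := (· ≤ ·)) ?_ (Finset.pairwise_sort _ _)
        (List.perm_of_nodup_nodup_toFinset_eq (List.nodup_reverse.mpr hnd1) (Finset.sort_nodup _ _)
          (by rw [List.toFinset_reverse, hfin1, Finset.sort_toFinset]))
      have : List.Chain' (· < ·) m₁.reverse := by
        rw [List.Chain', List.isChain_reverse]
        exact hch1
      exact (List.isChain_iff_pairwise.mp this).imp le_of_lt
    rw [← hrev, List.reverse_reverse]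
  rw [← hsplit, h2eq, h1eq, sortedJ]

lemma elt_zero (J : Finset ℕ) (L : List (Finset ℕ)) : elt J L 0 = ∅ := rfl

lemma elt_of_lt {J : Finset ℕ} {L : List (Finset ℕ)} {k : ℕ} (h : k < L.length) :
    elt J L (k + 1) = L[k] := by
  simp [elt, List.getD_eq_getElem _ _ h, List.getElem?_eq_getElem h]

lemma elt_of_ge {J : Finset ℕ} {L : List (Finset ℕ)} {k : ℕ} (h : L.length ≤ k) :
    elt J L (k + 1) = J := by
  simp [elt, List.getD_eq_default _ _ h, List.getElem?_eq_none h]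

lemma ssub {J' J'' : Finset ℕ} {L : List (Finset ℕ)} (hL : L ∈ P0 (J' ∪ J'')) :
    ∀ i ≤ L.length, elt (J' ∪ J'') L i ⊂ elt (J' ∪ J'') L (i + 1) := by
  obtain ⟨hne, hch, hbd⟩ := hL
  intro i hi
  match i with
  | 0 =>
    have h0 : 0 < L.length := List.length_pos_iff.mpr hne
    rw [elt_zero, elt_of_lt h0]
    exact (hbd _ (List.getElem_mem h0)).1
  | j + 1 =>
    have hj : j < L.length := hi
    rw [elt_of_lt hj]
    rcases lt_or_eq_of_le hi with h | h
    · rw [show j + 1 + 1 = (j + 1) + 1 from rfl, elt_of_lt h]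
      have := List.isChain_iff_getElem.mp hch j (by omega)
      simpa using this
    · rw [elt_of_ge (le_of_eq h.symm)]
      exact (hbd _ (List.getElem_mem hj)).2

lemma sub_J {J' J'' : Finset ℕ} {L : List (Finset ℕ)} (hL : L ∈ P0 (J' ∪ J'')) :
    ∀ i, elt (J' ∪ J'') L i ⊆ J' ∪ J'' := by
  obtain ⟨hne, hch, hbd⟩ := hL
  intro i
  match i with
  | 0 => simp [elt_zero]
  | k + 1 =>
    rcases lt_or_ge k L.length with h | h
    · rw [elt_of_lt h]; exact (hbd _ (List.getElem_mem h)).2.subset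
    · rw [elt_of_ge h]

lemma card_step {J' J'' : Finset ℕ} {L : List (Finset ℕ)} (hL : L ∈ P0 (J' ∪ J'')) :
    ∀ (k i : ℕ), i + k ≤ L.length + 1 →
      (elt (J' ∪ J'') L i).card + k ≤ (elt (J' ∪ J'') L (i + k)).card
  | 0, i => by simp
  | k + 1, i => fun h => by
    have h1 := card_step hL k i (by omega)
    have h2 := Finset.card_lt_card (ssub hL (i + k) (by omega))
    have e : i + (k + 1) = (i + k) + 1 := by omega
    rw [e]
    omega

lemma hcardJ {J' J'' : Finset ℕ} {L : List (Finset ℕ)} (hL : L ∈ P0 (J' ∪ J''))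
    (hlen : L.length = (J' ∪ J'').card - 1) : (J' ∪ J'').card = L.length + 1 := by
  obtain ⟨hne, hch, hbd⟩ := hL
  have h0 : 0 < L.length := List.length_pos_iff.mpr hne
  obtain ⟨A, hA⟩ := List.exists_mem_of_ne_nil L hne
  obtain ⟨h1, h2⟩ := hbd A hA
  have h3 : (J' ∪ J'').Nonempty := (Finset.empty_ssubset.mp h1).mono h2.subset
  have : 0 < (J' ∪ J'').card := Finset.card_pos.mpr h3
  omega

lemma card_elt {J' J'' : Finset ℕ} {L : List (Finset ℕ)} (hL : L ∈ P0 (J' ∪ J''))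
    (hlen : L.length = (J' ∪ J'').card - 1) :
    ∀ i ≤ L.length + 1, (elt (J' ∪ J'') L i).card = i := by
  intro i hi
  have h1 := card_step hL i 0 (by omega)
  have h2 := card_step hL (L.length + 1 - i) i (by omega)
  have e : i + (L.length + 1 - i) = L.length + 1 := by omega
  rw [e] at h2
  have hJ : elt (J' ∪ J'') L (L.length + 1) = J' ∪ J'' := by
    rw [show L.length + 1 = L.length + 1 from rfl]
    exact elt_of_ge (le_refl _)
  rw [hJ, hcardJ hL hlen] at h2
  rw [elt_zero, Finset.card_empty, Nat.zero_add] at h1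
  omega

def aSeq (J : Finset ℕ) (L : List (Finset ℕ)) (i : ℕ) : ℕ :=
  (elt J L (i + 1) \ elt J L i).min.untopD 0

lemma diff_eq {J' J'' : Finset ℕ} {L : List (Finset ℕ)} (hL : L ∈ P0 (J' ∪ J''))
    (hlen : L.length = (J' ∪ J'').card - 1) :
    ∀ i ≤ L.length, elt (J' ∪ J'') L (i + 1) \ elt (J' ∪ J'') L i
      = {aSeq (J' ∪ J'') L i} := by
  intro i hi
  have hsub := (ssub hL i hi).subset
  have hcard : (elt (J' ∪ J'') L (i + 1) \ elt (J' ∪ J'') L i).card = 1 := by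
    rw [Finset.card_sdiff_of_subset hsub, card_elt hL hlen (i + 1) (by omega),
      card_elt hL hlen i (by omega)]
    omega
  obtain ⟨c, hc⟩ := Finset.card_eq_one.mp hcard
  rw [hc]
  congr 1
  simp [aSeq, hc]
  rfl

lemma aSeq_not_mem {J' J'' : Finset ℕ} {L : List (Finset ℕ)} (hL : L ∈ P0 (J' ∪ J''))
    (hlen : L.length = (J' ∪ J'').card - 1) {i : ℕ} (hi : i ≤ L.length) :
    aSeq (J' ∪ J'') L i ∉ elt (J' ∪ J'') L i := by
  have h := diff_eq hL hlen i hi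
  have : aSeq (J' ∪ J'') L i ∈ elt (J' ∪ J'') L (i + 1) \ elt (J' ∪ J'') L i := by
    rw [h]; exact Finset.mem_singleton_self _
  exact (Finset.mem_sdiff.mp this).2

lemma elt_succ_eq {J' J'' : Finset ℕ} {L : List (Finset ℕ)} (hL : L ∈ P0 (J' ∪ J''))
    (hlen : L.length = (J' ∪ J'').card - 1) {i : ℕ} (hi : i ≤ L.length) :
    elt (J' ∪ J'') L (i + 1) = insert (aSeq (J' ∪ J'') L i) (elt (J' ∪ J'') L i) := by
  have hsub := (ssub hL i hi).subset
  rw [← Finset.sdiff_union_of_subset hsub, diff_eq hL hlen i hi, Finset.insert_eq]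

lemma aSeq_mem_J {J' J'' : Finset ℕ} {L : List (Finset ℕ)} (hL : L ∈ P0 (J' ∪ J''))
    (hlen : L.length = (J' ∪ J'').card - 1) {i : ℕ} (hi : i ≤ L.length) :
    aSeq (J' ∪ J'') L i ∈ J' ∪ J'' := by
  have h := elt_succ_eq hL hlen hi
  exact sub_J hL (i + 1) (h ▸ Finset.mem_insert_self _ _)

lemma elt_mono {J' J'' : Finset ℕ} {L : List (Finset ℕ)} (hL : L ∈ P0 (J' ∪ J'')) :
    ∀ j, j ≤ L.length + 1 → ∀ i, i ≤ j → elt (J' ∪ J'') L i ⊆ elt (J' ∪ J'') L j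
  | 0 => fun _ i hi => by
    interval_cases i
    exact subset_rfl
  | j + 1 => fun hj i hi => by
    rcases Nat.eq_or_lt_of_le hi with rfl | h
    · exact subset_rfl
    · exact (elt_mono hL j (by omega) i (by omega)).trans (ssub hL j (by omega)).subset

def aList (J : Finset ℕ) (L : List (Finset ℕ)) : List ℕ :=
  (List.range (L.length + 1)).map (aSeq J L)

lemma aList_length (J : Finset ℕ) (L : List (Finset ℕ)) :
    (aList J L).length = L.length + 1 := by simp [aList]

lemma aList_getElem (J : Finset ℕ) (L : List (Finset ℕ)) {i : ℕ}
    (h : i < (aList J L).length) : (aList J L)[i] = aSeq J L i := by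
  simp [aList]

lemma aList_nodup {J' J'' : Finset ℕ} {L : List (Finset ℕ)} (hL : L ∈ P0 (J' ∪ J''))
    (hlen : L.length = (J' ∪ J'').card - 1) : (aList (J' ∪ J'') L).Nodup := by
  show List.Pairwise _ _
  rw [aList, List.pairwise_map]
  refine List.pairwise_lt_range.imp_of_mem ?_
  intro i j hi hj hij
  rw [List.mem_range] at hi hj
  intro heq
  have h1 : aSeq (J' ∪ J'') L i ∈ elt (J' ∪ J'') L (i + 1) := by
    rw [elt_succ_eq hL hlen (by omega : i ≤ L.length)]
    exact Finset.mem_insert_self _ _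
  have h2 : elt (J' ∪ J'') L (i + 1) ⊆ elt (J' ∪ J'') L j :=
    elt_mono hL j (by omega) (i + 1) (by omega)
  exact aSeq_not_mem hL hlen (by omega : j ≤ L.length) (heq ▸ h2 h1)

lemma take_succ_toFinset {s : List ℕ} {i : ℕ} (h : i < s.length) :
    (s.take (i + 1)).toFinset = insert s[i] (s.take i).toFinset := by
  ext a
  rw [List.take_succ, List.getElem?_eq_getElem h]
  simp only [List.toFinset_append, Finset.mem_union, List.mem_toFinset, Finset.mem_insert,
    Option.toList_some, List.mem_cons, List.not_mem_nil, or_false, List.mem_singleton]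
  tauto

lemma elt_eq_take {J' J'' : Finset ℕ} {L : List (Finset ℕ)} (hL : L ∈ P0 (J' ∪ J''))
    (hlen : L.length = (J' ∪ J'').card - 1) :
    ∀ i ≤ L.length + 1, elt (J' ∪ J'') L i = ((aList (J' ∪ J'') L).take i).toFinset
  | 0 => fun _ => by simp [elt_zero]
  | i + 1 => fun hi => by
    rw [elt_succ_eq hL hlen (by omega : i ≤ L.length),
      elt_eq_take hL hlen i (by omega),
      take_succ_toFinset (by rw [aList_length]; omega : i < (aList (J' ∪ J'') L).length),
      aList_getElem]

lemma aList_toFinset {J' J'' : Finset ℕ} {L : List (Finset ℕ)} (hL : L ∈ P0 (J' ∪ J''))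
    (hlen : L.length = (J' ∪ J'').card - 1) :
    (aList (J' ∪ J'') L).toFinset = J' ∪ J'' := by
  have h := elt_eq_take hL hlen (L.length + 1) (le_refl _)
  rw [List.take_of_length_le (by rw [aList_length] : (aList (J' ∪ J'') L).length ≤ L.length + 1)] at h
  rw [← h]
  exact elt_of_ge (le_refl _)

lemma mM_single {J' J'' : Finset ℕ} (hdisj : Disjoint J' J'') {x : ℕ}
    (hx : x ∈ J' ∪ J'') : mM J' J'' {x} = x := by
  rcases Finset.mem_union.mp hx with h | h
  · rw [mM, Finset.singleton_inter_of_mem h, Finset.min_singleton]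
    rfl
  · rw [mM, Finset.singleton_inter_of_notMem (Finset.disjoint_right.mp hdisj h),
      Finset.singleton_inter_of_mem h, Finset.min_empty, Finset.max_singleton]
    rfl

lemma rel_iff_allowed {J' J'' : Finset ℕ} (hdisj : Disjoint J' J'') {x y : ℕ}
    (hx : x ∈ J' ∪ J'') (hy : y ∈ J' ∪ J'') :
    x ≠ mM J' J'' {x, y} ↔ allowedRel J' J'' x y := by
  by_cases hxy : x = y
  · subst hxy
    rw [show ({x, x} : Finset ℕ) = {x} by simp, mM_single hdisj hx]
    simp only [ne_eq, not_true_eq_false, false_iff, allowedRel]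
    rintro (⟨_, _, h⟩ | ⟨h1, h2⟩ | ⟨_, _, h⟩)
    · exact lt_irrefl _ h
    · exact Finset.disjoint_right.mp hdisj h1 h2
    · exact lt_irrefl _ h
  · exact mM_pair hdisj hx hy hxy

lemma diff2 {J' J'' : Finset ℕ} {L : List (Finset ℕ)} (hL : L ∈ P0 (J' ∪ J''))
    (hlen : L.length = (J' ∪ J'').card - 1) {j : ℕ} (hj : j + 1 ≤ L.length) :
    elt (J' ∪ J'') L (j + 2) \ elt (J' ∪ J'') L j
      = {aSeq (J' ∪ J'') L j, aSeq (J' ∪ J'') L (j + 1)} := by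
  have e2 : elt (J' ∪ J'') L (j + 2) = insert (aSeq (J' ∪ J'') L (j + 1))
      (elt (J' ∪ J'') L (j + 1)) := elt_succ_eq hL hlen hj
  have e1 : elt (J' ∪ J'') L (j + 1) = insert (aSeq (J' ∪ J'') L j)
      (elt (J' ∪ J'') L j) := elt_succ_eq hL hlen (by omega)
  have n1 : aSeq (J' ∪ J'') L j ∉ elt (J' ∪ J'') L j := aSeq_not_mem hL hlen (by omega)
  have n2 : aSeq (J' ∪ J'') L (j + 1) ∉ elt (J' ∪ J'') L (j + 1) := aSeq_not_mem hL hlen hj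
  have n2' : aSeq (J' ∪ J'') L (j + 1) ∉ elt (J' ∪ J'') L j := fun h =>
    n2 (e1 ▸ Finset.mem_insert_of_mem h)
  rw [e2, e1]
  ext x
  simp only [Finset.mem_sdiff, Finset.mem_insert, Finset.mem_singleton]
  constructor
  · rintro ⟨rfl | rfl | hx, hnx⟩
    · exact Or.inr rfl
    · exact Or.inl rfl
    · exact absurd hx hnx
  · rintro (rfl | rfl)
    · exact ⟨Or.inr (Or.inl rfl), n1⟩
    · exact ⟨Or.inl rfl, n2'⟩

lemma irregular_iff_step {J' J'' : Finset ℕ} {L : List (Finset ℕ)} (hL : L ∈ P0 (J' ∪ J''))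
    (hlen : L.length = (J' ∪ J'').card - 1) :
    Irregular J' J'' L ↔ ∀ m < L.length,
      aSeq (J' ∪ J'') L m ≠ mM J' J''
        {aSeq (J' ∪ J'') L m, aSeq (J' ∪ J'') L (m + 1)} := by
  constructor
  · intro h m hm heq
    apply h (m + 1)
    refine ⟨by omega, by omega, ?_, ?_⟩
    · intro i h1 h2
      exact card_elt hL hlen i (by omega)
    · rw [show m + 1 - 1 = m from rfl, diff_eq hL hlen m (by omega),
        show m + 1 + 1 = m + 2 from rfl, diff2 hL hlen (by omega : m + 1 ≤ L.length), ← heq]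
  · rintro h i₀ ⟨h1, h2, _, heq⟩
    obtain ⟨m, rfl⟩ : ∃ m, i₀ = m + 1 := ⟨i₀ - 1, by omega⟩
    rw [show m + 1 - 1 = m from rfl, diff_eq hL hlen m (by omega),
      show m + 1 + 1 = m + 2 from rfl, diff2 hL hlen (by omega : m + 1 ≤ L.length)] at heq
    exact h m (by omega) (Finset.singleton_injective heq)

lemma irregular_iff_chain {J' J'' : Finset ℕ} {L : List (Finset ℕ)} (hL : L ∈ P0 (J' ∪ J''))
    (hlen : L.length = (J' ∪ J'').card - 1) :
    Irregular J' J'' L ↔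
      List.Chain' (fun x y => x ≠ mM J' J'' {x, y}) (aList (J' ∪ J'') L) := by
  rw [irregular_iff_step hL hlen, aList, List.Chain', List.isChain_map]
  exact (List.isChain_range_succ (fun a b => aSeq (J' ∪ J'') L a ≠ mM J' J'' {aSeq (J' ∪ J'') L a, aSeq (J' ∪ J'') L b}) L.length).symm

lemma irregular_iff_aList {J' J'' : Finset ℕ} (hdisj : Disjoint J' J'')
    {L : List (Finset ℕ)} (hL : L ∈ P0 (J' ∪ J''))
    (hlen : L.length = (J' ∪ J'').card - 1) :
    Irregular J' J'' L ↔ aList (J' ∪ J'') L = sortedJ J' J'' := by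
  rw [irregular_iff_chain hL hlen]
  have hmem : ∀ x ∈ aList (J' ∪ J'') L, x ∈ J' ∪ J'' := fun x hx => by
    rw [← aList_toFinset hL hlen]; exact List.mem_toFinset.mpr hx
  constructor
  · intro hch
    refine eq_sortedJ hdisj (aList_nodup hL hlen) (aList_toFinset hL hlen) ?_
    exact chain'_imp_mem _
      (fun a ha b hb h => (rel_iff_allowed hdisj (hmem a ha) (hmem b hb)).mp h) hch
  · intro heq
    have hch : List.Chain' (allowedRel J' J'') (aList (J' ∪ J'') L) := by
      rw [heq]; exact chain'_sortedJ
    exact chain'_imp_mem _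
      (fun a ha b hb h => (rel_iff_allowed hdisj (hmem a ha) (hmem b hb)).mpr h) hch

lemma getElem_not_mem_take {s : List ℕ} (hs : s.Nodup) {i : ℕ} (h : i < s.length) :
    s[i] ∉ s.take i := by
  intro hmem
  obtain ⟨j, hj, hji⟩ := List.getElem_of_mem hmem
  rw [List.getElem_take] at hji
  have hjlen : j < i := by
    have := hj
    rw [List.length_take] at this
    omega
  have := (hs.getElem_inj_iff).mp hji
  omega

lemma eq_of_take_toFinset {s t : List ℕ} (hs : s.Nodup) (ht : t.Nodup)
    (hlen : s.length = t.length)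
    (h : ∀ i, (s.take i).toFinset = (t.take i).toFinset) : s = t := by
  refine List.ext_getElem hlen fun i h1 h2 => ?_
  have hm : s[i] ∈ (t.take (i + 1)).toFinset := by
    rw [← h, take_succ_toFinset h1]
    exact Finset.mem_insert_self _ _
  rw [take_succ_toFinset h2] at hm
  rcases Finset.mem_insert.mp hm with h' | h'
  · exact h'
  · exfalso
    rw [← h i] at h'
    exact getElem_not_mem_take hs h1 (List.mem_toFinset.mp h')

lemma piOneHat_length (J' J'' : Finset ℕ) :
    (piOneHat J' J'').length = (sortedJ J' J'').length - 1 := by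
  simp [piOneHat, chainOf]

lemma piOneHat_getElem (J' J'' : Finset ℕ) {k : ℕ} (h : k < (piOneHat J' J'').length) :
    (piOneHat J' J'')[k] = ((sortedJ J' J'').take (k + 1)).toFinset := by
  simp [piOneHat, chainOf]

lemma aList_eq_iff {J' J'' : Finset ℕ} (hdisj : Disjoint J' J'')
    {L : List (Finset ℕ)} (hL : L ∈ P0 (J' ∪ J''))
    (hlen : L.length = (J' ∪ J'').card - 1) :
    aList (J' ∪ J'') L = sortedJ J' J'' ↔ L = piOneHat J' J'' := by
  have hslen : (sortedJ J' J'').length = L.length + 1 := by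
    rw [sortedJ_length hdisj, hcardJ hL hlen]
  constructor
  · intro h
    refine List.ext_getElem ?_ ?_
    · rw [piOneHat_length]; omega
    · intro k h1 h2
      rw [piOneHat_getElem J' J'' h2, ← h, ← elt_of_lt h1, elt_eq_take hL hlen (k + 1) (by omega)]
  · intro h
    refine eq_of_take_toFinset (aList_nodup hL hlen) (sortedJ_nodup hdisj)
      (by rw [aList_length]; omega) ?_
    intro i
    rcases le_or_gt i (L.length + 1) with hi | hi
    · rw [← elt_eq_take hL hlen i hi]
      match i, hi with
      | 0, _ => simp [elt_zero]
      | k + 1, hk =>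
        rcases lt_or_ge k L.length with hkl | hkl
        · rw [elt_of_lt hkl,
            List.getElem_of_eq h hkl,
            piOneHat_getElem J' J'' (by rw [piOneHat_length]; omega)]
        · rw [elt_of_ge hkl, List.take_of_length_le (by omega), sortedJ_toFinset]
    · rw [List.take_of_length_le (by rw [aList_length]; omega),
        List.take_of_length_le (by omega), aList_toFinset hL hlen, sortedJ_toFinset]


/-- Among all chains `∅ ⊊ A_1 ⊊ ⋯ ⊊ A_{r−1} ⊊ J` of maximal length `r − 1`
(`r = |J|`), the **unique** nowhere-regular chain is `π^{1̂}`. -/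
theorem stmt_11 (J' J'' : Finset ℕ) (hdisj : Disjoint J' J'')
    (hlt : ∀ a ∈ J', ∀ b ∈ J'', a < b)
    (L : List (Finset ℕ)) (hL : L ∈ P0 (J' ∪ J''))
    (hlen : L.length = (J' ∪ J'').card - 1) :
    Irregular J' J'' L ↔ L = piOneHat J' J'' := by
  rw [irregular_iff_aList hdisj hL hlen]
  exact aList_eq_iff hdisj hL hlen
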